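/- Let M, S be positive integers with S ≤ 2^{M−1} and let δ ∈ (0,1]. Let Ω be a uniformly random subset of {0,1}^M of cardinality S. Then the probability that there exist distinct x, y ∈ Ω whose Hamming distance is at most (M/2)·(1 − √(2·log₂(S²/δ)/M)) is at most δ. -/

import Mathlib

open Classical Finset Real in
lemma stmt9_sum_pow (M : ℕ) (x : Fin M → Bool) (r : ℝ) :
    ∑ y : Fin M → Bool, r ^ hammingDist x y = (1 + r) ^ M := by
  have h : ∀ y : Fin M → Bool,
      r ^ hammingDist x y = ∏ i, (if x i ≠ y i then r else 1) := by
    intro y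
    rw [hammingDist, Finset.prod_ite, Finset.prod_const, Finset.prod_const, one_pow, mul_one]
  simp_rw [h]
  rw [← Fintype.prod_sum (fun (i : Fin M) (b : Bool) => if x i ≠ b then r else 1)]
  have : ∀ i : Fin M, (∑ b : Bool, if x i ≠ b then r else 1) = 1 + r := by
    intro i
    cases hx : x i <;> simp [Fintype.sum_bool, hx] <;> ring
  simp_rw [this, Finset.prod_const, Finset.card_univ, Fintype.card_fin]

open Finset Real in
lemma stmt9_ball (M : ℕ) (x : Fin M → Bool) (d t : ℝ) (ht : 0 ≤ t)
    (F : Finset (Fin M → Bool)) (hF : ∀ y ∈ F, (hammingDist x y : ℝ) ≤ d) :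
    (F.card : ℝ) ≤ Real.exp (t * d) * (1 + Real.exp (-t)) ^ M := by
  have key : ∀ y : Fin M → Bool,
      Real.exp (t * (d - hammingDist x y)) = Real.exp (t * d) * Real.exp (-t) ^ hammingDist x y := by
    intro y
    rw [← Real.exp_nat_mul, ← Real.exp_add]
    ring_nf
  calc (F.card : ℝ) = ∑ _y ∈ F, (1 : ℝ) := by simp
    _ ≤ ∑ y ∈ F, Real.exp (t * (d - hammingDist x y)) := by
        refine Finset.sum_le_sum fun y hy => Real.one_le_exp ?_
        exact mul_nonneg ht (by linarith [hF y hy])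
    _ ≤ ∑ y : Fin M → Bool, Real.exp (t * (d - hammingDist x y)) :=
        Finset.sum_le_sum_of_subset_of_nonneg (Finset.subset_univ F)
          (fun y _ _ => (Real.exp_pos _).le)
    _ = Real.exp (t * d) * ∑ y : Fin M → Bool, Real.exp (-t) ^ hammingDist x y := by
        simp_rw [key]; rw [Finset.mul_sum]
    _ = Real.exp (t * d) * (1 + Real.exp (-t)) ^ M := by rw [stmt9_sum_pow]

open Real in
lemma stmt9_scalar (M : ℕ) (ε : ℝ) (hε : 0 ≤ ε) :
    Real.exp (2 * ε * ((M : ℝ) / 2 * (1 - ε))) * (1 + Real.exp (-(2 * ε))) ^ M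
      ≤ 2 ^ M * Real.exp (-((M : ℝ) * ε ^ 2 / 2)) := by
  have base : Real.exp (ε * (1 - ε)) * (1 + Real.exp (-(2 * ε))) ≤ 2 * Real.exp (-(ε ^ 2 / 2)) := by
    have h1 : Real.exp (ε * (1 - ε)) * (1 + Real.exp (-(2 * ε)))
        = Real.exp (-ε ^ 2) * (2 * Real.cosh ε) := by
      have e1 : Real.exp (-ε ^ 2) * Real.exp ε = Real.exp (ε * (1 - ε)) := by
        rw [← Real.exp_add]; ring_nf
      have e2 : Real.exp (-ε ^ 2) * Real.exp (-ε)
          = Real.exp (ε * (1 - ε)) * Real.exp (-(2 * ε)) := by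
        rw [← Real.exp_add, ← Real.exp_add]; ring_nf
      rw [Real.cosh_eq]
      linear_combination -e1 - e2
    rw [h1]
    have h2 : Real.cosh ε ≤ Real.exp (ε ^ 2 / 2) := Real.cosh_le_exp_half_sq ε
    calc Real.exp (-ε ^ 2) * (2 * Real.cosh ε) ≤ Real.exp (-ε ^ 2) * (2 * Real.exp (ε ^ 2 / 2)) := by
          have := Real.exp_pos (-ε ^ 2)
          nlinarith [Real.cosh_pos (x := ε)]
      _ = 2 * Real.exp (-(ε ^ 2 / 2)) := by
          have e3 : Real.exp (-ε ^ 2) * Real.exp (ε ^ 2 / 2) = Real.exp (-(ε ^ 2 / 2)) := by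
            rw [← Real.exp_add]; ring_nf
          linear_combination 2 * e3
  have hMrw : Real.exp (2 * ε * ((M : ℝ) / 2 * (1 - ε))) = Real.exp (ε * (1 - ε)) ^ M := by
    rw [← Real.exp_nat_mul]; ring_nf
  rw [hMrw, ← mul_pow]
  calc (Real.exp (ε * (1 - ε)) * (1 + Real.exp (-(2 * ε)))) ^ M
      ≤ (2 * Real.exp (-(ε ^ 2 / 2))) ^ M := by
        refine pow_le_pow_left₀ (by positivity) base M
    _ = 2 ^ M * Real.exp (-((M : ℝ) * ε ^ 2 / 2)) := by
        rw [mul_pow, ← Real.exp_nat_mul]; ring_nf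


lemma stmt9_pair_count (M S : ℕ) (hS : 2 ≤ S) (x y : Fin M → Bool) (hxy : x ≠ y) :
    ((Finset.univ.powersetCard S).filter
        (fun Ω : Finset (Fin M → Bool) => x ∈ Ω ∧ y ∈ Ω)).card
      = (2 ^ M - 2).choose (S - 2) := by
  classical
  have hpair : ({x, y} : Finset (Fin M → Bool)).card = 2 := Finset.card_pair hxy
  have huniv : (Finset.univ : Finset (Fin M → Bool)).card = 2 ^ M := by simp
  have kt : (((Finset.univ : Finset (Fin M → Bool)) \ {x, y}).powersetCard (S - 2)).card
      = (2 ^ M - 2).choose (S - 2) := by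
    rw [Finset.card_powersetCard, Finset.card_sdiff_of_subset (Finset.subset_univ _), hpair, huniv]
  rw [← kt]
  refine Finset.card_bij' (fun Ω _ => Ω \ {x, y}) (fun t _ => t ∪ {x, y}) ?_ ?_ ?_ ?_
  · intro Ω hΩ
    rw [Finset.mem_filter, Finset.mem_powersetCard_univ] at hΩ
    obtain ⟨hcard, hx, hy⟩ := hΩ
    have hsub : ({x, y} : Finset (Fin M → Bool)) ⊆ Ω :=
      Finset.insert_subset hx (Finset.singleton_subset_iff.2 hy)
    refine Finset.mem_powersetCard.2 ⟨Finset.sdiff_subset_sdiff (Finset.subset_univ _)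
      (Finset.Subset.refl _), ?_⟩
    rw [Finset.card_sdiff_of_subset hsub, hpair, hcard]
  · intro t ht
    rw [Finset.mem_powersetCard] at ht
    obtain ⟨hsub, hcard⟩ := ht
    have hdisj : Disjoint t ({x, y} : Finset (Fin M → Bool)) :=
      Finset.disjoint_left.2 fun a ha hb => (Finset.mem_sdiff.1 (hsub ha)).2 hb
    rw [Finset.mem_filter, Finset.mem_powersetCard_univ]
    refine ⟨?_, ?_, ?_⟩
    · rw [Finset.card_union_of_disjoint hdisj, hcard, hpair]
      omega
    · simp
    · simp
  · intro Ω hΩ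
    rw [Finset.mem_filter] at hΩ
    have hsub : ({x, y} : Finset (Fin M → Bool)) ⊆ Ω :=
      Finset.insert_subset hΩ.2.1 (Finset.singleton_subset_iff.2 hΩ.2.2)
    exact Finset.sdiff_union_of_subset hsub
  · intro t ht
    rw [Finset.mem_powersetCard] at ht
    have hdisj : Disjoint t ({x, y} : Finset (Fin M → Bool)) :=
      Finset.disjoint_left.2 fun a ha hb => (Finset.mem_sdiff.1 (ht.1 ha)).2 hb
    exact Finset.union_sdiff_cancel_right hdisj


lemma stmt9_choose (n k : ℕ) :
    (n + 2).choose (k + 2) * ((k + 2) * (k + 1)) = (n + 2) * (n + 1) * n.choose k := by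
  have h1 := Nat.add_one_mul_choose_eq (n + 1) (k + 1)
  have h2 := Nat.add_one_mul_choose_eq n k
  calc (n + 2).choose (k + 2) * ((k + 2) * (k + 1))
      = ((n + 1 + 1) * (n + 1).choose (k + 1)) * (k + 1) := by rw [h1]; ring
    _ = (n + 2) * ((n + 1).choose (k + 1) * (k + 1)) := by ring
    _ = (n + 2) * ((n + 1) * n.choose k) := by rw [← h2]
    _ = (n + 2) * (n + 1) * n.choose k := by ring

lemma stmt9_count_ineq (N S : ℕ) (h2S : 2 ≤ S) (hSN : S ≤ N) :
    N * N * ((N - 2).choose (S - 2)) ≤ N.choose S * (S * S) := by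
  obtain ⟨k, rfl⟩ : ∃ k, S = k + 2 := ⟨S - 2, by omega⟩
  obtain ⟨n, rfl⟩ : ∃ n, N = n + 2 := ⟨N - 2, by omega⟩
  have hkn : k ≤ n := by omega
  have hid := stmt9_choose n k
  simp only [Nat.add_sub_cancel]
  have key : ((n + 2) * (n + 2) * n.choose k) * ((k + 2) * (k + 1) * (n + 1))
      ≤ ((n + 2).choose (k + 2) * ((k + 2) * (k + 2))) * ((k + 2) * (k + 1) * (n + 1)) := by
    calc ((n + 2) * (n + 2) * n.choose k) * ((k + 2) * (k + 1) * (n + 1))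
        = ((n + 2) * (n + 1) * n.choose k) * ((n + 2) * ((k + 2) * (k + 1))) := by ring
      _ = ((n + 2).choose (k + 2) * ((k + 2) * (k + 1))) * ((n + 2) * ((k + 2) * (k + 1))) := by
          rw [hid]
      _ = ((n + 2).choose (k + 2) * ((k + 2) * (k + 1) * (k + 2))) * ((n + 2) * (k + 1)) := by
          ring
      _ ≤ ((n + 2).choose (k + 2) * ((k + 2) * (k + 1) * (k + 2))) * ((k + 2) * (n + 1)) := by
          refine Nat.mul_le_mul_left _ ?_
          nlinarith
      _ = ((n + 2).choose (k + 2) * ((k + 2) * (k + 2))) * ((k + 2) * (k + 1) * (n + 1)) := by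
          ring
  exact Nat.le_of_mul_le_mul_right key (by positivity)





open Classical in
/-- Gilbert–Varshamov-style bound: for a uniformly random subset `Ω` of
`{0,1}^M` of cardinality `S ≤ 2^{M−1}`, the probability that some pair of distinct
elements of `Ω` is within Hamming distance `(M/2)·(1 − √(2·log₂(S²/δ)/M))` is at
most `δ`. -/
theorem stmt9 (M S : ℕ) (hM : 0 < M) (hS : 0 < S) (hS2 : S ≤ 2 ^ (M - 1))
    (δ : ℝ) (hδ : 0 < δ) (hδ1 : δ ≤ 1) :
    ((Finset.filter
        (fun Ω : Finset (Fin M → Bool) => ∃ x ∈ Ω, ∃ y ∈ Ω, x ≠ y ∧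
          (hammingDist x y : ℝ) ≤
            ((M : ℝ) / 2) * (1 - Real.sqrt (2 * Real.logb 2 ((S : ℝ) ^ 2 / δ) / M)))
        ((Finset.univ : Finset (Fin M → Bool)).powersetCard S)).card : ℝ)
      / (((Finset.univ : Finset (Fin M → Bool)).powersetCard S).card : ℝ) ≤ δ := by
  set d : ℝ := ((M : ℝ) / 2) * (1 - Real.sqrt (2 * Real.logb 2 ((S : ℝ) ^ 2 / δ) / M)) with hd
  set pc := ((Finset.univ : Finset (Fin M → Bool)).powersetCard S) with hpc
  set Q : Finset (Fin M → Bool) → Prop :=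
    fun Ω => ∃ x ∈ Ω, ∃ y ∈ Ω, x ≠ y ∧ (hammingDist x y : ℝ) ≤ d with hQ
  have hNS : S ≤ 2 ^ M := le_trans hS2 (Nat.pow_le_pow_right (by norm_num) (Nat.sub_le M 1))
  have hCcard : pc.card = (2 ^ M).choose S := by
    rw [hpc, Finset.card_powersetCard, Finset.card_univ, Fintype.card_fun,
      Fintype.card_bool, Fintype.card_fin]
  have hCpos : 0 < pc.card := by rw [hCcard]; exact Nat.choose_pos hNS
  have hCpos' : (0 : ℝ) < (pc.card : ℝ) := by exact_mod_cast hCpos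
  rw [div_le_iff₀ hCpos']
  -- case S = 1
  rcases eq_or_lt_of_le (show 1 ≤ S from hS) with h1 | hS2'
  · have hempty : pc.filter Q = ∅ := by
      rw [Finset.filter_eq_empty_iff]
      rintro Ω hΩ ⟨x, hx, y, hy, hxy, -⟩
      have hcard : Ω.card = S := by
        rw [hpc, Finset.mem_powersetCard_univ] at hΩ; exact hΩ
      have : ({x, y} : Finset (Fin M → Bool)).card ≤ Ω.card :=
        Finset.card_le_card (Finset.insert_subset hx (Finset.singleton_subset_iff.2 hy))
      rw [Finset.card_pair hxy, hcard] at this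
      omega
    rw [hempty]
    simp only [Finset.card_empty, Nat.cast_zero]
    exact mul_nonneg hδ.le (Nat.cast_nonneg _)
  -- main case: 2 ≤ S
  have hS2'' : 2 ≤ S := hS2'
  set ε : ℝ := Real.sqrt (2 * Real.logb 2 ((S : ℝ) ^ 2 / δ) / M) with hε
  set L : ℝ := Real.logb 2 ((S : ℝ) ^ 2 / δ) with hL
  have hS1 : (1 : ℝ) ≤ (S : ℝ) := by exact_mod_cast hS
  have hratio : (1 : ℝ) ≤ (S : ℝ) ^ 2 / δ := by
    rw [le_div_iff₀ hδ]; nlinarith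
  have hL0 : 0 ≤ L := Real.logb_nonneg one_lt_two hratio
  have hε0 : 0 ≤ ε := Real.sqrt_nonneg _
  have hMne : (M : ℝ) ≠ 0 := Nat.cast_ne_zero.2 hM.ne'
  have hε2 : ε ^ 2 = 2 * L / M := by
    rw [hε, hL, Real.sq_sqrt (by positivity)]
  have hLM : (M : ℝ) * ε ^ 2 / 2 = L := by
    rw [hε2]; field_simp
  -- Chernoff bound
  have hW : ∀ x : Fin M → Bool, ∀ F : Finset (Fin M → Bool),
      (∀ y ∈ F, (hammingDist x y : ℝ) ≤ d) →
      (F.card : ℝ) ≤ 2 ^ M * (δ / (S : ℝ) ^ 2) := by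
    intro x F hF
    have hb := stmt9_ball M x d (2 * ε) (by positivity) F hF
    have hsc := stmt9_scalar M ε hε0
    have hexp : Real.exp (-((M : ℝ) * ε ^ 2 / 2)) ≤ δ / (S : ℝ) ^ 2 := by
      rw [hLM]
      have h2L : (2 : ℝ) ^ L = (S : ℝ) ^ 2 / δ :=
        Real.rpow_logb two_pos (by norm_num) (by positivity)
      have hlog2 : Real.log 2 ≤ 1 := by
        have := Real.log_le_sub_one_of_pos (by norm_num : (0 : ℝ) < 2); linarith
      have hlog2' : 0 < Real.log 2 := Real.log_pos one_lt_two
      have e1 : Real.exp (-L) ≤ (2 : ℝ) ^ (-L) := by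
        rw [Real.rpow_def_of_pos two_pos]
        apply Real.exp_le_exp.2
        nlinarith
      have e2 : (2 : ℝ) ^ (-L) = δ / (S : ℝ) ^ 2 := by
        rw [Real.rpow_neg (by norm_num : (0 : ℝ) ≤ 2), h2L, inv_div]
      rw [← e2]; exact e1
    calc (F.card : ℝ) ≤ Real.exp (2 * ε * d) * (1 + Real.exp (-(2 * ε))) ^ M := hb
      _ ≤ 2 ^ M * Real.exp (-((M : ℝ) * ε ^ 2 / 2)) := by rw [hd]; exact hsc
      _ ≤ 2 ^ M * (δ / (S : ℝ) ^ 2) := by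
          exact mul_le_mul_of_nonneg_left hexp (by positivity)
  -- union bound over ordered pairs (in ℕ)
  set D2 := (2 ^ M - 2).choose (S - 2) with hD2
  have hUB : (pc.filter Q).card ≤
      ∑ x : Fin M → Bool,
        D2 * (Finset.univ.filter fun y : Fin M → Bool => (hammingDist x y : ℝ) ≤ d).card := by
    calc (pc.filter Q).card
        ≤ ∑ Ω ∈ pc.filter Q,
            (Finset.univ.filter (fun p : (Fin M → Bool) × (Fin M → Bool) =>
              (p.1 ≠ p.2 ∧ (hammingDist p.1 p.2 : ℝ) ≤ d) ∧ p.1 ∈ Ω ∧ p.2 ∈ Ω)).card := by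
          rw [Finset.card_eq_sum_ones]
          refine Finset.sum_le_sum fun Ω hΩ => ?_
          obtain ⟨-, x, hx, y, hy, hxy, hdist⟩ := Finset.mem_filter.1 hΩ
          refine Finset.card_pos.2 ⟨(x, y), ?_⟩
          simp only [Finset.mem_filter, Finset.mem_univ, true_and]
          exact ⟨⟨hxy, hdist⟩, hx, hy⟩
      _ ≤ ∑ Ω ∈ pc,
            (Finset.univ.filter (fun p : (Fin M → Bool) × (Fin M → Bool) =>
              (p.1 ≠ p.2 ∧ (hammingDist p.1 p.2 : ℝ) ≤ d) ∧ p.1 ∈ Ω ∧ p.2 ∈ Ω)).card :=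
          Finset.sum_le_sum_of_subset (Finset.filter_subset _ _)
      _ = ∑ Ω ∈ pc, ∑ p : (Fin M → Bool) × (Fin M → Bool),
            if (p.1 ≠ p.2 ∧ (hammingDist p.1 p.2 : ℝ) ≤ d) ∧ p.1 ∈ Ω ∧ p.2 ∈ Ω
            then 1 else 0 :=
          Finset.sum_congr rfl fun Ω _ => Finset.card_filter _ _
      _ = ∑ p : (Fin M → Bool) × (Fin M → Bool), ∑ Ω ∈ pc,
            if (p.1 ≠ p.2 ∧ (hammingDist p.1 p.2 : ℝ) ≤ d) ∧ p.1 ∈ Ω ∧ p.2 ∈ Ω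
            then 1 else 0 := Finset.sum_comm
      _ ≤ ∑ p : (Fin M → Bool) × (Fin M → Bool),
            (if (hammingDist p.1 p.2 : ℝ) ≤ d then D2 else 0) := by
          refine Finset.sum_le_sum fun p _ => ?_
          by_cases hc : p.1 ≠ p.2 ∧ (hammingDist p.1 p.2 : ℝ) ≤ d
          · rw [if_pos hc.2]
            have heq : ∀ Ω ∈ pc,
                (if (p.1 ≠ p.2 ∧ (hammingDist p.1 p.2 : ℝ) ≤ d) ∧ p.1 ∈ Ω ∧ p.2 ∈ Ω
                 then 1 else 0)
                  = if p.1 ∈ Ω ∧ p.2 ∈ Ω then 1 else 0 := by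
              intro Ω _
              by_cases hm : p.1 ∈ Ω ∧ p.2 ∈ Ω
              · rw [if_pos ⟨hc, hm⟩, if_pos hm]
              · rw [if_neg (fun h => hm h.2), if_neg hm]
            rw [Finset.sum_congr rfl heq, ← Finset.card_filter]
            rw [hD2, hpc]
            exact le_of_eq (stmt9_pair_count M S hS2'' p.1 p.2 hc.1)
          · have heq : ∀ Ω ∈ pc,
                (if (p.1 ≠ p.2 ∧ (hammingDist p.1 p.2 : ℝ) ≤ d) ∧ p.1 ∈ Ω ∧ p.2 ∈ Ω
                 then 1 else 0) = 0 := fun Ω _ => if_neg (fun h => hc h.1)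
            rw [Finset.sum_congr rfl heq, Finset.sum_const_zero]
            exact Nat.zero_le _
      _ = ∑ x : Fin M → Bool, ∑ y : Fin M → Bool,
            (if (hammingDist x y : ℝ) ≤ d then D2 else 0) := Fintype.sum_prod_type _
      _ = ∑ x : Fin M → Bool,
            D2 * (Finset.univ.filter fun y : Fin M → Bool =>
              (hammingDist x y : ℝ) ≤ d).card := by
          refine Finset.sum_congr rfl fun x _ => ?_
          rw [Finset.sum_ite, Finset.sum_const, Finset.sum_const_zero, add_zero,
            smul_eq_mul, mul_comm]
  -- put it together in ℝ
  have hsum : ((pc.filter Q).card : ℝ) ≤ (2 ^ M : ℝ) * ((D2 : ℝ) * (2 ^ M * (δ / (S : ℝ) ^ 2))) := by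
    calc ((pc.filter Q).card : ℝ)
        ≤ ((∑ x : Fin M → Bool,
            D2 * (Finset.univ.filter fun y : Fin M → Bool =>
              (hammingDist x y : ℝ) ≤ d).card : ℕ) : ℝ) := by exact_mod_cast hUB
      _ = ∑ x : Fin M → Bool,
            (D2 : ℝ) * ((Finset.univ.filter fun y : Fin M → Bool =>
              (hammingDist x y : ℝ) ≤ d).card : ℝ) := by push_cast; rfl
      _ ≤ ∑ _x : Fin M → Bool, (D2 : ℝ) * (2 ^ M * (δ / (S : ℝ) ^ 2)) := by
          refine Finset.sum_le_sum fun x _ => ?_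
          exact mul_le_mul_of_nonneg_left
            (hW x _ (fun y hy => (Finset.mem_filter.1 hy).2)) (Nat.cast_nonneg _)
      _ = (2 ^ M : ℝ) * ((D2 : ℝ) * (2 ^ M * (δ / (S : ℝ) ^ 2))) := by
          rw [Finset.sum_const, Finset.card_univ, Fintype.card_fun, Fintype.card_bool,
            Fintype.card_fin, nsmul_eq_mul]
          push_cast
          ring
  have hNN : 2 ^ M * 2 ^ M * D2 ≤ (2 ^ M).choose S * (S * S) :=
    stmt9_count_ineq (2 ^ M) S hS2'' hNS
  have hSne : ((S : ℝ)) ≠ 0 := by positivity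
  calc ((pc.filter Q).card : ℝ)
      ≤ (2 ^ M : ℝ) * ((D2 : ℝ) * (2 ^ M * (δ / (S : ℝ) ^ 2))) := hsum
    _ = ((2 ^ M * 2 ^ M * D2 : ℕ) : ℝ) * (δ / (S : ℝ) ^ 2) := by push_cast; ring
    _ ≤ (((2 ^ M).choose S * (S * S) : ℕ) : ℝ) * (δ / (S : ℝ) ^ 2) := by
        refine mul_le_mul_of_nonneg_right ?_ (by positivity)
        exact_mod_cast hNN
    _ = δ * (((2 ^ M).choose S : ℕ) : ℝ) := by
        push_cast
        field_simp
    _ = δ * (pc.card : ℝ) := by rw [hCcard]
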